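/- Let u and v be positive integers with 2v > u, let φ₀ be a real number, and let b, e, B₀ : ℝ → ℝ be continuously differentiable with b(φ₀) ≠ 0. Suppose B₀′(φ) = (φ − φ₀)^{u−1} b(φ) for all φ, and set d(φ) = (φ − φ₀)^v e(φ). Then the precession term T(φ), defined for φ ≠ φ₀ near φ₀, tends to 0 as φ → φ₀. In other words, at a flattening point where B₀′ vanishes to order u − 1 and d vanishes to order v with 2v − u > 0, the term T = (B₀² d²/B₀′)′/4 behaves like (φ − φ₀)^{2v−u} and vanishes at φ₀. -/

import Mathlib

open Filter Topology

/-- If `B₀′(φ) = (φ − φ₀)^{u−1} b(φ)` with `b(φ₀) ≠ 0`,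
`d(φ) = (φ − φ₀)^v e(φ)`, and `2v > u` (u, v positive integers, b, e, B₀ C¹), then the
precession term `T(φ) = (1/4) d/dφ [B₀² d²/B₀′](φ)` tends to 0 as `φ → φ₀`. -/
theorem precession_term_vanishes_at_flattening
    (u v : ℕ) (hu : 0 < u) (hv : 0 < v) (huv : u < 2 * v)
    (φ₀ : ℝ) (b e B₀ : ℝ → ℝ)
    (hb : ContDiff ℝ 1 b) (he : ContDiff ℝ 1 e) (hB₀ : ContDiff ℝ 1 B₀)
    (hbφ₀ : b φ₀ ≠ 0)
    (hB₀' : ∀ φ : ℝ, deriv B₀ φ = (φ - φ₀) ^ (u - 1) * b φ)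
    (d : ℝ → ℝ) (hd : ∀ φ : ℝ, d φ = (φ - φ₀) ^ v * e φ)
    (T : ℝ → ℝ)
    (hT : ∀ ψ : ℝ, T ψ =
      (1/4) * deriv (fun x : ℝ => (B₀ x) ^ 2 * (d x) ^ 2 / deriv B₀ x) ψ) :
    Tendsto T (𝓝[≠] φ₀) (𝓝 0) := by
  set k : ℕ := 2 * v - u + 1 with hkdef
  have hk2 : 2 ≤ k := by omega
  set U : Set ℝ := {x | b x ≠ 0} with hUdef
  have hUopen : IsOpen U := isOpen_compl_singleton.preimage hb.continuous
  have hφ₀U : φ₀ ∈ U := hbφ₀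
  set g : ℝ → ℝ := fun x => B₀ x ^ 2 * e x ^ 2 / b x with hgdef
  have hg : ContDiffOn ℝ 1 g U := by
    apply ContDiffOn.div
    · exact (hB₀.pow 2).contDiffOn.mul (he.pow 2).contDiffOn
    · exact hb.contDiffOn
    · exact fun x hx => hx
  have hgdiff : ∀ x ∈ U, DifferentiableAt ℝ g x := fun x hx =>
    ((hg.differentiableOn one_ne_zero) x hx).differentiableAt (hUopen.mem_nhds hx)
  have hgderivcont : ContinuousOn (deriv g) U :=
    hg.continuousOn_deriv_of_isOpen hUopen le_rfl
  -- pointwise identity away from φ₀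
  have heq : ∀ x : ℝ, x ≠ φ₀ →
      B₀ x ^ 2 * d x ^ 2 / deriv B₀ x = (x - φ₀) ^ k * g x := by
    intro x hx
    have hx0 : x - φ₀ ≠ 0 := sub_ne_zero.2 hx
    rw [hd, hB₀']
    have hnum : B₀ x ^ 2 * ((x - φ₀) ^ v * e x) ^ 2
        = (x - φ₀) ^ (u - 1) * ((x - φ₀) ^ k * (B₀ x ^ 2 * e x ^ 2)) := by
      rw [← mul_assoc, ← pow_add, show u - 1 + k = 2 * v by omega]
      ring
    rw [hnum, mul_div_mul_left _ _ (pow_ne_zero _ hx0), mul_div_assoc]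
  -- deriv formula on U \ {φ₀}
  have hderiv : ∀ ψ : ℝ, ψ ∈ U → ψ ≠ φ₀ →
      deriv (fun x : ℝ => (B₀ x) ^ 2 * (d x) ^ 2 / deriv B₀ x) ψ
        = (k : ℝ) * (ψ - φ₀) ^ (k - 1) * g ψ + (ψ - φ₀) ^ k * deriv g ψ := by
    intro ψ hψU hψ
    have hev : (fun x : ℝ => (B₀ x) ^ 2 * (d x) ^ 2 / deriv B₀ x)
        =ᶠ[𝓝 ψ] fun x => (x - φ₀) ^ k * g x := by
      filter_upwards [isOpen_ne.mem_nhds hψ] with x hx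
      exact heq x hx
    rw [hev.deriv_eq]
    have h1 : HasDerivAt (fun x : ℝ => (x - φ₀) ^ k)
        ((k : ℝ) * (ψ - φ₀) ^ (k - 1) * 1) ψ :=
      ((hasDerivAt_id ψ).sub_const φ₀).pow k
    have h2 : HasDerivAt g (deriv g ψ) ψ := (hgdiff ψ hψU).hasDerivAt
    have : deriv (fun x => (x - φ₀) ^ k * g x) ψ = _ := (h1.mul h2).deriv
    rw [this]; ring
  -- the limiting function
  set L : ℝ → ℝ := fun ψ =>
    (1/4) * ((k : ℝ) * (ψ - φ₀) ^ (k - 1) * g ψ + (ψ - φ₀) ^ k * deriv g ψ)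
    with hLdef
  have hTL : T =ᶠ[𝓝[≠] φ₀] L := by
    filter_upwards [self_mem_nhdsWithin,
      nhdsWithin_le_nhds (hUopen.mem_nhds hφ₀U)] with ψ hψ hψU
    rw [hT, hderiv ψ hψU hψ]
  have hLcont : ContinuousAt L φ₀ := by
    have hgc : ContinuousAt g φ₀ :=
      (hg.continuousOn φ₀ hφ₀U).continuousAt (hUopen.mem_nhds hφ₀U)
    have hgc' : ContinuousAt (deriv g) φ₀ :=
      (hgderivcont φ₀ hφ₀U).continuousAt (hUopen.mem_nhds hφ₀U)
    fun_prop
  have hL0 : L φ₀ = 0 := by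
    simp [hLdef, zero_pow (by omega : k - 1 ≠ 0), zero_pow (by omega : k ≠ 0)]
  refine Tendsto.congr' hTL.symm ?_
  rw [← hL0]
  exact hLcont.continuousWithinAt.tendsto
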